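/- Fix α ∈ (0, 1/2), φ(s) := |s|^{α-1} for s < 0, and let h(x,t) := ∫_{-2}^{t} φ(s) · ( (2/√π) ∫₀^{x/(2√(t-s))} e^{-y²} dy ) ds for x ≥ 0, t ∈ (-2,0). Then: (i) for every t ∈ (-2,0) and every x ≥ 0, the spatial derivative exists and equals ∂_x h(x,t) = (1/√π) ∫_{-2}^{t} |s|^{α-1} (t-s)^{-1/2} e^{-x²/(4(t-s))} ds; (ii) ∂_x h(0,t) = (1/√π) ∫_{-2}^{t} |s|^{α-1} (t-s)^{-1/2} ds tends to +∞ as t → 0⁻; (iii) consequently, for every r ∈ (0, 1/2] and every M > 0 there exists (x,t) with 0 < x < r and -r² < t < 0 such that ∂_x h(x,t) > M; in particular ∂_x h is not bounded on (0,r) × (-r², 0) for any r ∈ (0,1/2]. -/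

import Mathlib

open Set Filter MeasureTheory
open scoped Interval

noncomputable section

/-- The error-function solution `Φ(x,t) = (2/√π) ∫₀^{x/(2√t)} e^{-y²} dy`. -/
def Phi (x t : ℝ) : ℝ :=
  (2 / Real.sqrt Real.pi) * ∫ y in (0 : ℝ)..(x / (2 * Real.sqrt t)), Real.exp (-y ^ 2)

/-- `h(x,t) = ∫_{-2}^t |s|^{α-1} Φ(x, t-s) ds`. -/
def heatSol (α x t : ℝ) : ℝ :=
  ∫ s in (-2 : ℝ)..t, |s| ^ (α - 1) * Phi x (t - s)

lemma hasDerivAt_G (u : ℝ) :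
    HasDerivAt (fun v : ℝ => ∫ y in (0:ℝ)..v, Real.exp (-y ^ 2)) (Real.exp (-u ^ 2)) u := by
  have hc : Continuous fun y : ℝ => Real.exp (-y ^ 2) := by continuity
  exact intervalIntegral.integral_hasDerivAt_right (hc.intervalIntegrable _ _)
    hc.stronglyMeasurable.stronglyMeasurableAtFilter hc.continuousAt

lemma continuous_G : Continuous fun v : ℝ => ∫ y in (0:ℝ)..v, Real.exp (-y ^ 2) :=
  continuous_iff_continuousAt.2 fun u => (hasDerivAt_G u).continuousAt

lemma hasDerivAt_Phi {τ : ℝ} (hτ : 0 < τ) (x : ℝ) :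
    HasDerivAt (fun y => Phi y τ)
      ((1 / Real.sqrt Real.pi) * τ ^ (-(1/2) : ℝ) * Real.exp (-x ^ 2 / (4 * τ))) x := by
  have hsτ : 0 < Real.sqrt τ := Real.sqrt_pos.2 hτ
  have h1 : HasDerivAt (fun y : ℝ => y / (2 * Real.sqrt τ)) (1 / (2 * Real.sqrt τ)) x :=
    (hasDerivAt_id x).div_const _
  have h2 := ((hasDerivAt_G (x / (2 * Real.sqrt τ))).comp x h1).const_mul (2 / Real.sqrt Real.pi)
  have hrw : τ ^ (-(1/2) : ℝ) = (Real.sqrt τ)⁻¹ := by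
    rw [Real.rpow_neg hτ.le, Real.sqrt_eq_rpow]
  have hx2 : -(x / (2 * Real.sqrt τ)) ^ 2 = -x ^ 2 / (4 * τ) := by
    rw [div_pow, mul_pow, Real.sq_sqrt hτ.le]
    ring_nf
  refine h2.congr_deriv (Eq.symm ?_)
  rw [hx2, hrw]
  have hπ : (0:ℝ) < Real.sqrt Real.pi := Real.sqrt_pos.2 Real.pi_pos
  field_simp

lemma intInt_rpow (t : ℝ) :
    IntervalIntegrable (fun s => (t - s) ^ (-(1/2) : ℝ)) volume (-2) t := by
  have h : IntervalIntegrable (fun s : ℝ => s ^ (-(1/2) : ℝ)) volume (t + 2) 0 :=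
    intervalIntegral.intervalIntegrable_rpow' (by norm_num)
  have h2 := h.comp_sub_left t
  have e1 : t - (t + 2) = -2 := by ring
  have e2 : t - 0 = t := by ring
  rwa [e1, e2] at h2

lemma abs_Phi_le {τ : ℝ} (hτ : 0 < τ) (x : ℝ) :
    |Phi x τ| ≤ (|x| / Real.sqrt Real.pi) * τ ^ (-(1/2) : ℝ) := by
  have hsτ : 0 < Real.sqrt τ := Real.sqrt_pos.2 hτ
  have hπ : (0:ℝ) < Real.sqrt Real.pi := Real.sqrt_pos.2 Real.pi_pos
  have h1 : ‖∫ y in (0:ℝ)..(x / (2 * Real.sqrt τ)), Real.exp (-y ^ 2)‖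
      ≤ 1 * |x / (2 * Real.sqrt τ) - 0| := by
    apply intervalIntegral.norm_integral_le_of_norm_le_const
    intro y _
    rw [Real.norm_eq_abs, abs_of_pos (Real.exp_pos _)]
    calc Real.exp (-y ^ 2) ≤ Real.exp 0 := Real.exp_le_exp.2 (neg_nonpos.2 (sq_nonneg y))
      _ = 1 := Real.exp_zero
  rw [Real.norm_eq_abs] at h1
  have hrw : τ ^ (-(1/2) : ℝ) = (Real.sqrt τ)⁻¹ := by
    rw [Real.rpow_neg hτ.le, Real.sqrt_eq_rpow]
  unfold Phi
  rw [abs_mul, hrw]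
  calc |2 / Real.sqrt Real.pi| * |∫ y in (0:ℝ)..(x / (2 * Real.sqrt τ)), Real.exp (-y ^ 2)|
      ≤ (2 / Real.sqrt Real.pi) * (1 * |x / (2 * Real.sqrt τ) - 0|) := by
        rw [abs_of_pos (by positivity)]
        exact mul_le_mul_of_nonneg_left h1 (by positivity)
    _ = |x| / Real.sqrt Real.pi * (Real.sqrt τ)⁻¹ := by
        rw [sub_zero, abs_div, abs_of_pos (by positivity : (0:ℝ) < 2 * Real.sqrt τ)]
        field_simp

lemma meas_Phi (t z : ℝ) : Measurable fun s : ℝ => Phi z (t - s) := by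
  unfold Phi
  apply Measurable.const_mul
  exact continuous_G.measurable.comp
    (measurable_const.div ((measurable_const.mul
      ((Real.continuous_sqrt.measurable.comp (measurable_const.sub measurable_id))))))

lemma meas_absrpow (α : ℝ) : Measurable fun s : ℝ => |s| ^ (α - 1) :=
  (measurable_id.abs).pow measurable_const

lemma meas_trpow (t : ℝ) : Measurable fun s : ℝ => (t - s) ^ (-(1/2) : ℝ) :=
  (measurable_const.sub measurable_id).pow measurable_const

lemma meas_expfac (t x : ℝ) : Measurable fun s : ℝ => Real.exp (-x ^ 2 / (4 * (t - s))) :=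
  Real.measurable_exp.comp (measurable_const.div
    (measurable_const.mul (measurable_const.sub measurable_id)))

lemma ae_ne_t (t : ℝ) : ∀ᵐ s : ℝ ∂(volume : Measure ℝ), s ≠ t := by
  rw [ae_iff]
  simp only [ne_eq, not_not, setOf_eq_eq_singleton]
  exact measure_singleton t

lemma key_hasDerivAt (α : ℝ) (hα : α ∈ Ioo (0:ℝ) (1/2)) {t : ℝ} (ht : t ∈ Ioo (-2:ℝ) 0)
    (x : ℝ) :
    HasDerivAt (fun y => heatSol α y t)
      ((1 / Real.sqrt Real.pi) *
        ∫ s in (-2:ℝ)..t, |s| ^ (α - 1) * (t - s) ^ (-(1/2) : ℝ) *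
          Real.exp (-x ^ 2 / (4 * (t - s)))) x := by
  obtain ⟨ht1, ht2⟩ := ht
  have hπ : (0:ℝ) < Real.sqrt Real.pi := Real.sqrt_pos.2 Real.pi_pos
  have hα1 : α - 1 ≤ 0 := by linarith [hα.2]
  have htpos : (0:ℝ) < |t| := abs_pos.2 (ne_of_lt ht2)
  have hIoc : Ι (-2:ℝ) t = Ioc (-2:ℝ) t := uIoc_of_le ht1.le
  -- facts on the interval
  have habs : ∀ s : ℝ, s ≤ t → |s| ^ (α - 1) ≤ |t| ^ (α - 1) := by
    intro s hs
    refine Real.rpow_le_rpow_of_nonpos htpos ?_ hα1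
    rw [abs_of_neg ht2, abs_of_neg (lt_of_le_of_lt hs ht2)]
    linarith
  set F' : ℝ → ℝ → ℝ := fun z s => |s| ^ (α - 1) *
    (1 / Real.sqrt Real.pi * (t - s) ^ (-(1/2) : ℝ) * Real.exp (-z ^ 2 / (4 * (t - s)))) with hF'
  have hF_meas : ∀ᶠ z in nhds x, AEStronglyMeasurable
      (fun s => |s| ^ (α - 1) * Phi z (t - s)) (volume.restrict (Ι (-2:ℝ) t)) :=
    Filter.Eventually.of_forall fun z =>
      ((meas_absrpow α).mul (meas_Phi t z)).aestronglyMeasurable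
  have hF_int : IntervalIntegrable (fun s => |s| ^ (α - 1) * Phi x (t - s)) volume (-2) t := by
    apply IntervalIntegrable.mono_fun
      (((intInt_rpow t).const_mul (|t| ^ (α - 1) * (|x| / Real.sqrt Real.pi))))
      ((meas_absrpow α).mul (meas_Phi t x)).aestronglyMeasurable
    filter_upwards [ae_restrict_of_ae (ae_ne_t t), ae_restrict_mem measurableSet_uIoc]
      with s hsne hsmem
    rw [hIoc] at hsmem
    have hst : s < t := lt_of_le_of_ne hsmem.2 hsne
    have hts : (0:ℝ) < t - s := by linarith
    have h1 : |Phi x (t - s)| ≤ |x| / Real.sqrt Real.pi * (t - s) ^ (-(1/2) : ℝ) :=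
      abs_Phi_le hts x
    have hrpow_nonneg : (0:ℝ) ≤ (t - s) ^ (-(1/2) : ℝ) := Real.rpow_nonneg hts.le _
    simp only [Pi.mul_apply]
    rw [Real.norm_eq_abs, Real.norm_eq_abs, abs_mul (|s| ^ (α - 1)),
      abs_of_nonneg (Real.rpow_nonneg (abs_nonneg s) _)]
    have h2 : |s| ^ (α - 1) * |Phi x (t - s)| ≤
        |t| ^ (α - 1) * (|x| / Real.sqrt Real.pi * (t - s) ^ (-(1/2) : ℝ)) :=
      mul_le_mul (habs s hst.le) h1 (abs_nonneg _)
        (Real.rpow_nonneg (abs_nonneg t) _)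
    calc |s| ^ (α - 1) * |Phi x (t - s)|
        ≤ |t| ^ (α - 1) * (|x| / Real.sqrt Real.pi * (t - s) ^ (-(1/2) : ℝ)) := h2
      _ = |t| ^ (α - 1) * (|x| / Real.sqrt Real.pi) * (t - s) ^ (-(1/2) : ℝ) := by ring
      _ ≤ |(|t| ^ (α - 1) * (|x| / Real.sqrt Real.pi)) * (t - s) ^ (-(1/2) : ℝ)| := le_abs_self _
  have hF'_meas : AEStronglyMeasurable (F' x) (volume.restrict (Ι (-2:ℝ) t)) :=
    ((meas_absrpow α).mul ((measurable_const.mul (meas_trpow t)).mul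
      (meas_expfac t x))).aestronglyMeasurable
  have h_bound : ∀ᵐ s : ℝ ∂volume, s ∈ Ι (-2:ℝ) t → ∀ z ∈ Metric.ball x 1,
      ‖F' z s‖ ≤ |t| ^ (α - 1) / Real.sqrt Real.pi * (t - s) ^ (-(1/2) : ℝ) := by
    filter_upwards [ae_ne_t t] with s hsne hsmem z _
    rw [hIoc] at hsmem
    have hst : s < t := lt_of_le_of_ne hsmem.2 hsne
    have hts : (0:ℝ) < t - s := by linarith
    have hrpow_nonneg : (0:ℝ) ≤ (t - s) ^ (-(1/2) : ℝ) := Real.rpow_nonneg hts.le _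
    have hexp1 : Real.exp (-z ^ 2 / (4 * (t - s))) ≤ 1 := by
      calc Real.exp (-z ^ 2 / (4 * (t - s))) ≤ Real.exp 0 :=
            Real.exp_le_exp.2 (div_nonpos_of_nonpos_of_nonneg (neg_nonpos.2 (sq_nonneg z))
              (by positivity))
        _ = 1 := Real.exp_zero
    have hnn : (0:ℝ) ≤ F' z s := by
      apply mul_nonneg (Real.rpow_nonneg (abs_nonneg s) _)
      apply mul_nonneg (mul_nonneg (by positivity) hrpow_nonneg) (Real.exp_pos _).le
    rw [Real.norm_eq_abs, abs_of_nonneg hnn]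
    calc F' z s ≤ |s| ^ (α - 1) * (1 / Real.sqrt Real.pi * (t - s) ^ (-(1/2) : ℝ) * 1) := by
          apply mul_le_mul_of_nonneg_left _ (Real.rpow_nonneg (abs_nonneg s) _)
          exact mul_le_mul_of_nonneg_left hexp1 (mul_nonneg (by positivity) hrpow_nonneg)
      _ ≤ |t| ^ (α - 1) * (1 / Real.sqrt Real.pi * (t - s) ^ (-(1/2) : ℝ) * 1) := by
          apply mul_le_mul_of_nonneg_right (habs s hst.le)
          exact mul_nonneg (mul_nonneg (by positivity) hrpow_nonneg) zero_le_one
      _ = |t| ^ (α - 1) / Real.sqrt Real.pi * (t - s) ^ (-(1/2) : ℝ) := by ring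
  have bound_int : IntervalIntegrable
      (fun s => |t| ^ (α - 1) / Real.sqrt Real.pi * (t - s) ^ (-(1/2) : ℝ)) volume (-2) t :=
    (intInt_rpow t).const_mul _
  have h_diff : ∀ᵐ s : ℝ ∂volume, s ∈ Ι (-2:ℝ) t → ∀ z ∈ Metric.ball x 1,
      HasDerivAt (fun z => |s| ^ (α - 1) * Phi z (t - s)) (F' z s) z := by
    filter_upwards [ae_ne_t t] with s hsne hsmem z _
    rw [hIoc] at hsmem
    have hst : s < t := lt_of_le_of_ne hsmem.2 hsne
    have hts : (0:ℝ) < t - s := by linarith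
    exact (hasDerivAt_Phi hts z).const_mul (|s| ^ (α - 1))
  have H := (intervalIntegral.hasDerivAt_integral_of_dominated_loc_of_deriv_le (Metric.ball_mem_nhds x zero_lt_one)
    hF_meas hF_int hF'_meas h_bound bound_int h_diff).2
  refine H.congr_deriv (Eq.symm ?_)
  rw [← intervalIntegral.integral_const_mul]
  apply intervalIntegral.integral_congr
  intro s _
  simp only [hF']
  ring

lemma integrand_nonneg (α t x : ℝ) {s : ℝ} (hs : s ≤ t) :
    0 ≤ |s| ^ (α - 1) * (t - s) ^ (-(1/2) : ℝ) * Real.exp (-x ^ 2 / (4 * (t - s))) :=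
  mul_nonneg (mul_nonneg (Real.rpow_nonneg (abs_nonneg s) _)
    (Real.rpow_nonneg (by linarith) _)) (Real.exp_pos _).le

lemma integrand_intInt (α : ℝ) (hα : α ∈ Ioo (0:ℝ) (1/2)) {t : ℝ} (ht : t ∈ Ioo (-2:ℝ) 0)
    (x : ℝ) : IntervalIntegrable
      (fun s => |s| ^ (α - 1) * (t - s) ^ (-(1/2) : ℝ) * Real.exp (-x ^ 2 / (4 * (t - s))))
      volume (-2) t := by
  obtain ⟨ht1, ht2⟩ := ht
  have htpos : (0:ℝ) < |t| := abs_pos.2 (ne_of_lt ht2)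
  have hα1 : α - 1 ≤ 0 := by linarith [hα.2]
  have hIoc : Ι (-2:ℝ) t = Ioc (-2:ℝ) t := uIoc_of_le ht1.le
  apply IntervalIntegrable.mono_fun ((intInt_rpow t).const_mul (|t| ^ (α - 1)))
    (((meas_absrpow α).mul (meas_trpow t)).mul (meas_expfac t x)).aestronglyMeasurable
  filter_upwards [ae_restrict_of_ae (ae_ne_t t), ae_restrict_mem measurableSet_uIoc]
    with s hsne hsmem
  rw [hIoc] at hsmem
  have hst : s < t := lt_of_le_of_ne hsmem.2 hsne
  have hts : (0:ℝ) < t - s := by linarith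
  have hrpow_nonneg : (0:ℝ) ≤ (t - s) ^ (-(1/2) : ℝ) := Real.rpow_nonneg hts.le _
  have hexp1 : Real.exp (-x ^ 2 / (4 * (t - s))) ≤ 1 := by
    calc Real.exp (-x ^ 2 / (4 * (t - s))) ≤ Real.exp 0 :=
          Real.exp_le_exp.2 (div_nonpos_of_nonpos_of_nonneg (neg_nonpos.2 (sq_nonneg x))
            (by positivity))
      _ = 1 := Real.exp_zero
  have habs : |s| ^ (α - 1) ≤ |t| ^ (α - 1) := by
    refine Real.rpow_le_rpow_of_nonpos htpos ?_ hα1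
    rw [abs_of_neg ht2, abs_of_neg (lt_trans hst ht2)]
    linarith
  simp only [Pi.mul_apply]
  rw [Real.norm_eq_abs, Real.norm_eq_abs, abs_of_nonneg (integrand_nonneg α t x hst.le)]
  calc |s| ^ (α - 1) * (t - s) ^ (-(1/2) : ℝ) * Real.exp (-x ^ 2 / (4 * (t - s)))
      ≤ |s| ^ (α - 1) * (t - s) ^ (-(1/2) : ℝ) * 1 :=
        mul_le_mul_of_nonneg_left hexp1
          (mul_nonneg (Real.rpow_nonneg (abs_nonneg s) _) hrpow_nonneg)
    _ = |s| ^ (α - 1) * (t - s) ^ (-(1/2) : ℝ) := by ring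
    _ ≤ |t| ^ (α - 1) * (t - s) ^ (-(1/2) : ℝ) :=
        mul_le_mul_of_nonneg_right habs hrpow_nonneg
    _ ≤ |(|t| ^ (α - 1)) * (t - s) ^ (-(1/2) : ℝ)| := le_abs_self _

lemma lower_bound (α : ℝ) (hα : α ∈ Ioo (0:ℝ) (1/2)) {t : ℝ} (ht : t ∈ Ioo (-1:ℝ) 0)
    {x : ℝ} (hx : x ^ 2 ≤ -2 * t) :
    (2:ℝ) ^ (α - 2) * (Real.exp 1)⁻¹ * (-t) ^ (α - 1/2) ≤
      ∫ s in (-2:ℝ)..t, |s| ^ (α - 1) * (t - s) ^ (-(1/2) : ℝ) *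
        Real.exp (-x ^ 2 / (4 * (t - s))) := by
  obtain ⟨ht1, ht2⟩ := ht
  have ht' : t ∈ Ioo (-2:ℝ) 0 := ⟨by linarith, ht2⟩
  set f : ℝ → ℝ := fun s => |s| ^ (α - 1) * (t - s) ^ (-(1/2) : ℝ) *
    Real.exp (-x ^ 2 / (4 * (t - s))) with hf
  have hfi : IntervalIntegrable f volume (-2) t := integrand_intInt α hα ht' x
  have h0 : (0:ℝ) < -t := by linarith
  -- subinterval integrabilities
  have hsub1 : uIcc (-2:ℝ) (2*t) ⊆ uIcc (-2:ℝ) t := by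
    rw [uIcc_of_le (by linarith), uIcc_of_le (by linarith)]
    exact Icc_subset_Icc (le_refl _) (by linarith)
  have hsub2 : uIcc (2*t) (3*t/2) ⊆ uIcc (-2:ℝ) t := by
    rw [uIcc_of_le (by linarith), uIcc_of_le (by linarith)]
    exact Icc_subset_Icc (by linarith) (by linarith)
  have hsub3 : uIcc (3*t/2) t ⊆ uIcc (-2:ℝ) t := by
    rw [uIcc_of_le (by linarith), uIcc_of_le (by linarith)]
    exact Icc_subset_Icc (by linarith) (le_refl _)
  have h1 : IntervalIntegrable f volume (-2) (2*t) := hfi.mono_set hsub1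
  have h2 : IntervalIntegrable f volume (2*t) (3*t/2) := hfi.mono_set hsub2
  have h3 : IntervalIntegrable f volume (3*t/2) t := hfi.mono_set hsub3
  have hsplit : (∫ s in (-2:ℝ)..t, f s) =
      (∫ s in (-2:ℝ)..(2*t), f s) + ((∫ s in (2*t)..(3*t/2), f s) + ∫ s in (3*t/2)..t, f s) := by
    rw [intervalIntegral.integral_add_adjacent_intervals h2 h3,
      intervalIntegral.integral_add_adjacent_intervals h1 (h2.trans h3)]
  have hnn1 : 0 ≤ ∫ s in (-2:ℝ)..(2*t), f s :=
    intervalIntegral.integral_nonneg (by linarith) fun u hu => integrand_nonneg α t x (by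
      rcases hu with ⟨_, hu2⟩; linarith)
  have hnn3 : 0 ≤ ∫ s in (3*t/2)..t, f s :=
    intervalIntegral.integral_nonneg (by linarith) fun u hu => integrand_nonneg α t x (by
      rcases hu with ⟨_, hu2⟩; linarith)
  -- middle piece
  set c : ℝ := (2*(-t)) ^ (α - 1) * (-t) ^ (-(1/2) : ℝ) * Real.exp (-1) with hc
  have hmid : c * (-t/2) ≤ ∫ s in (2*t)..(3*t/2), f s := by
    have hconst : (∫ _ in (2*t)..(3*t/2), c) = c * (-t/2) := by
      rw [intervalIntegral.integral_const, smul_eq_mul]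
      ring
    rw [← hconst]
    apply intervalIntegral.integral_mono_on (by linarith)
      (intervalIntegrable_const) h2
    intro s hs
    obtain ⟨hs1, hs2⟩ := hs
    have hts_lb : -t/2 ≤ t - s := by linarith
    have hts_ub : t - s ≤ -t := by linarith
    have hts : (0:ℝ) < t - s := by linarith
    have hspos : (0:ℝ) < |s| := abs_pos.2 (by nlinarith)
    have e1 : |s| ≤ 2*(-t) := by
      rw [abs_of_neg (by nlinarith)]
      linarith
    have f1 : (2*(-t)) ^ (α - 1) ≤ |s| ^ (α - 1) :=
      Real.rpow_le_rpow_of_nonpos hspos e1 (by linarith [hα.2])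
    have f2 : (-t) ^ (-(1/2) : ℝ) ≤ (t - s) ^ (-(1/2) : ℝ) :=
      Real.rpow_le_rpow_of_nonpos hts hts_ub (by norm_num)
    have f3 : Real.exp (-1) ≤ Real.exp (-x ^ 2 / (4 * (t - s))) := by
      apply Real.exp_le_exp.2
      rw [neg_div, neg_le_neg_iff, div_le_one (by positivity)]
      nlinarith
    calc c ≤ |s| ^ (α - 1) * (t - s) ^ (-(1/2) : ℝ) * Real.exp (-1) := by
          apply mul_le_mul_of_nonneg_right _ (Real.exp_pos _).le
          exact mul_le_mul f1 f2 (Real.rpow_nonneg h0.le _) (Real.rpow_nonneg hspos.le _)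
      _ ≤ f s := mul_le_mul_of_nonneg_left f3
          (mul_nonneg (Real.rpow_nonneg (abs_nonneg s) _) (Real.rpow_nonneg hts.le _))
  have hcval : c * (-t/2) = (2:ℝ) ^ (α - 2) * (Real.exp 1)⁻¹ * (-t) ^ (α - 1/2) := by
    rw [hc, Real.mul_rpow (by norm_num) h0.le, Real.exp_neg]
    have e2 : (2:ℝ) ^ (α - 2) = 2 ^ (α - 1) * 2 ^ (-1 : ℝ) := by
      rw [← Real.rpow_add (by norm_num)]; congr 1; ring
    have e3 : (-t) ^ (α - 1/2) = (-t) ^ (α - 1) * (-t) ^ (-(1/2) : ℝ) * (-t) ^ (1 : ℝ) := by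
      rw [← Real.rpow_add h0, ← Real.rpow_add h0]; congr 1; ring
    rw [e2, e3, Real.rpow_neg_one, Real.rpow_one]
    ring
  rw [hsplit, ← hcval]
  linarith

lemma tendsto_aux (c : ℝ) (hc : 0 < c) (p : ℝ) (hp : p < 0) :
    Tendsto (fun u : ℝ => c * u ^ p) (nhdsWithin 0 (Ioi 0)) atTop := by
  apply Tendsto.const_mul_atTop hc
  have h1 : Tendsto (fun u : ℝ => u ^ (-p)) (nhdsWithin 0 (Ioi 0)) (nhdsWithin 0 (Ioi 0)) := by
    rw [tendsto_nhdsWithin_iff]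
    constructor
    · have hcont := (Real.continuousAt_rpow_const 0 (-p) (Or.inr (by linarith))).tendsto
      rw [Real.zero_rpow (ne_of_gt (neg_pos.2 hp))] at hcont
      exact hcont.mono_left nhdsWithin_le_nhds
    · filter_upwards [self_mem_nhdsWithin] with u hu
      exact Real.rpow_pos_of_pos hu _
  have h2 := tendsto_inv_nhdsGT_zero.comp h1
  apply h2.congr'
  filter_upwards [self_mem_nhdsWithin] with u hu
  simp only [Function.comp_apply]
  rw [← Real.rpow_neg (le_of_lt hu), neg_neg]

/-- Unboundedness of the spatial derivative of the counterexample solution `h`: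
(i) `∂ₓ h` exists with the explicit formula; (ii) at `x = 0` it equals
`(1/√π) ∫_{-2}^t |s|^{α-1} (t-s)^{-1/2} ds`, which tends to `+∞` as `t → 0⁻`;
(iii) hence `∂ₓ h` is unbounded on `(0,r) × (-r²,0)` for every `r ∈ (0,1/2]`. -/
theorem gradient_of_counterexample_unbounded (α : ℝ) (hα : α ∈ Ioo (0 : ℝ) (1 / 2)) :
    -- (i) existence and formula for the spatial derivative
    (∀ t ∈ Ioo (-2 : ℝ) 0, ∀ x : ℝ, 0 ≤ x →
      HasDerivAt (fun y => heatSol α y t)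
        ((1 / Real.sqrt Real.pi) *
          ∫ s in (-2 : ℝ)..t, |s| ^ (α - 1) * (t - s) ^ (-(1 / 2) : ℝ) *
            Real.exp (-x ^ 2 / (4 * (t - s)))) x) ∧
    -- (ii) the value at `x = 0` and its blow-up as `t → 0⁻`
    (∀ t ∈ Ioo (-2 : ℝ) 0,
      deriv (fun y => heatSol α y t) 0
        = (1 / Real.sqrt Real.pi) *
            ∫ s in (-2 : ℝ)..t, |s| ^ (α - 1) * (t - s) ^ (-(1 / 2) : ℝ)) ∧
    Tendsto (fun t => deriv (fun y => heatSol α y t) 0)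
      (nhdsWithin 0 (Iio 0)) atTop ∧
    -- (iii) unboundedness of `∂ₓ h` on `(0,r) × (-r²,0)` for every `r ∈ (0,1/2]`
    (∀ r ∈ Ioc (0 : ℝ) (1 / 2), ∀ M : ℝ, 0 < M →
      ∃ x t : ℝ, 0 < x ∧ x < r ∧ -r ^ 2 < t ∧ t < 0 ∧
        M < deriv (fun y => heatSol α y t) x) := by
  have hα0 := hα.1
  have hα2 := hα.2
  have hπ : (0:ℝ) < Real.sqrt Real.pi := Real.sqrt_pos.2 Real.pi_pos
  set C : ℝ := 1 / Real.sqrt Real.pi * ((2:ℝ) ^ (α - 2) * (Real.exp 1)⁻¹) with hC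
  have hCpos : 0 < C := by positivity
  have hmono := tendsto_aux C hCpos (α - 1/2) (by linarith)
  refine ⟨fun t ht x _ => key_hasDerivAt α hα ht x, ?_, ?_, ?_⟩
  · -- (ii) value at 0
    intro t ht
    rw [(key_hasDerivAt α hα ht 0).deriv]
    congr 1
    apply intervalIntegral.integral_congr
    intro s _
    norm_num
  · -- (ii) blow-up
    have hneg : Tendsto (fun t : ℝ => -t) (nhdsWithin (0:ℝ) (Iio 0)) (nhdsWithin 0 (Ioi 0)) := by
      rw [tendsto_nhdsWithin_iff]
      constructor
      · simpa using (continuous_neg.tendsto (0:ℝ)).mono_left nhdsWithin_le_nhds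
      · filter_upwards [self_mem_nhdsWithin] with u hu
        simpa using hu
    apply tendsto_atTop_mono' _ _ (hmono.comp hneg)
    filter_upwards [Ioo_mem_nhdsLT_of_mem
      (show (0:ℝ) ∈ Ioc (-1:ℝ) 0 from ⟨by norm_num, le_refl 0⟩)] with t htm
    have ht2 : t ∈ Ioo (-2:ℝ) 0 := ⟨by linarith [htm.1], htm.2⟩
    have hlb := lower_bound α hα htm (x := 0) (by nlinarith [htm.2])
    simp only [Function.comp_apply]
    rw [(key_hasDerivAt α hα ht2 0).deriv]
    calc C * (-t) ^ (α - 1/2)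
        = 1 / Real.sqrt Real.pi * ((2:ℝ) ^ (α - 2) * (Real.exp 1)⁻¹ * (-t) ^ (α - 1/2)) := by
          rw [hC]; ring
      _ ≤ _ := mul_le_mul_of_nonneg_left hlb (by positivity)
  · -- (iii)
    intro r hr M hM
    obtain ⟨hr0, hr2⟩ := hr
    have hev1 := hmono.eventually_gt_atTop M
    have hev2 : ∀ᶠ u in nhdsWithin (0:ℝ) (Ioi 0), u ∈ Ioo (0:ℝ) (r^2) :=
      Filter.eventually_iff.2 (Ioo_mem_nhdsGT_of_mem ⟨le_refl 0, by positivity⟩)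
    obtain ⟨u, hu1, hu2⟩ := (hev1.and hev2).exists
    have hu0 : 0 < u := hu2.1
    have hur : u < r^2 := hu2.2
    have hu1' : u < 1 := by nlinarith
    refine ⟨u, -u, hu0, by nlinarith, by linarith, by linarith, ?_⟩
    have htmem : (-u) ∈ Ioo (-2:ℝ) 0 := ⟨by linarith, by linarith⟩
    rw [(key_hasDerivAt α hα htmem u).deriv]
    have hlb := lower_bound α hα (t := -u) ⟨by linarith, by linarith⟩ (x := u) (by nlinarith)
    rw [neg_neg] at hlb
    calc M < C * u ^ (α - 1/2) := hu1
      _ = 1 / Real.sqrt Real.pi * ((2:ℝ) ^ (α - 2) * (Real.exp 1)⁻¹ * u ^ (α - 1/2)) := by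
          rw [hC]; ring
      _ ≤ _ := mul_le_mul_of_nonneg_left hlb (by positivity)
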